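/- For every queue automaton there exists a queue automaton with only singleton enqueues and separate dequeues whose process graph is branching bisimilar (and hence whose language is equal) to that of the original automaton. -/

import Mathlib

/-- A labelled transition system with silent action `τ` modelled as `none`. -/
structure LTS (S A : Type) where
  tr : S → Option A → S → Prop
  fin : S → Prop

/-- Zero or more τ-steps. -/
def LTS.tauStar {S A : Type} (L : LTS S A) : S → S → Prop :=
  Relation.ReflTransGen (fun s t => L.tr s none t)

/-- `s →(a) t` : either `s →a t`, or `a = τ` and `s = t`. -/
def LTS.optStep {S A : Type} (L : LTS S A) (s : S) (a : Option A) (t : S) : Prop :=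
  L.tr s a t ∨ (a = none ∧ s = t)

/-- A symmetric relation `R` is a strong bisimulation. -/
def IsStrongBisim {S A : Type} (L : LTS S A) (R : S → S → Prop) : Prop :=
  (∀ s t, R s t → R t s) ∧
  (∀ s t, R s t →
    (∀ a s', L.tr s a s' → ∃ t', L.tr t a t' ∧ R s' t') ∧
    (L.fin s → L.fin t))

/-- Strong bisimilarity: related by some strong bisimulation. -/
def Bisim {S A : Type} (L : LTS S A) (s t : S) : Prop :=
  ∃ R, IsStrongBisim L R ∧ R s t

/-- A symmetric relation `R` is a branching bisimulation. -/
def IsBranchingBisim {S A : Type} (L : LTS S A) (R : S → S → Prop) : Prop :=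
  (∀ s t, R s t → R t s) ∧
  (∀ s t, R s t →
    (∀ a s', L.tr s a s' →
      ∃ t'' t', L.tauStar t t'' ∧ L.optStep t'' a t' ∧ R s t'' ∧ R s' t') ∧
    (L.fin s → ∃ t', L.tauStar t t' ∧ L.fin t'))

/-- Branching bisimilarity: related by some branching bisimulation. -/
def BBisim {S A : Type} (L : LTS S A) (s t : S) : Prop :=
  ∃ R, IsBranchingBisim L R ∧ R s t

/-- Weak word transitions: τ-steps do not contribute to the word. -/
inductive WStep {S A : Type} (L : LTS S A) : S → List A → S → Prop
  | refl (s : S) : WStep L s [] s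
  | act {s t u : S} {a : A} {w : List A} :
      L.tr s (some a) t → WStep L t w u → WStep L s (a :: w) u
  | tau {s t u : S} {w : List A} :
      L.tr s none t → WStep L t w u → WStep L s w u

/-- The language of a state: words leading to a terminating state. -/
def LTS.lang {S A : Type} (L : LTS S A) (s : S) : Set (List A) :=
  { w | ∃ t, WStep L s w t ∧ L.fin t }

/-- A branching bisimulation between (the states of) two LTSs. -/
def IsBBisimSys {S₁ S₂ A : Type} (L₁ : LTS S₁ A) (L₂ : LTS S₂ A)
    (R : S₁ → S₂ → Prop) : Prop :=
  (∀ s t, R s t →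
    (∀ a s', L₁.tr s a s' →
      ∃ t'' t', L₂.tauStar t t'' ∧ L₂.optStep t'' a t' ∧ R s t'' ∧ R s' t') ∧
    (L₁.fin s → ∃ t', L₂.tauStar t t' ∧ L₂.fin t')) ∧
  (∀ s t, R s t →
    (∀ a t', L₂.tr t a t' →
      ∃ s'' s', L₁.tauStar s s'' ∧ L₁.optStep s'' a s' ∧ R s'' t ∧ R s' t') ∧
    (L₂.fin t → ∃ s', L₁.tauStar s s' ∧ L₁.fin s'))

/-- Two pointed process graphs are branching bisimilar. -/
def BBisimSys {S₁ S₂ A : Type} (L₁ : LTS S₁ A) (s : S₁) (L₂ : LTS S₂ A) (t : S₂) : Prop :=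
  ∃ R, IsBBisimSys L₁ L₂ R ∧ R s t

/-- The head condition of a queue-automaton transition: `ε`, `*`, or a datum. -/
inductive Head (D : Type) where
  | emp : Head D
  | star : Head D
  | data (d : D) : Head D

/-- A queue automaton. -/
structure QA (S A D : Type) where
  tr : S → Option A → Head D → List D → S → Prop
  init : S
  fin : S → Prop

/-- Effect of a transition with head condition `h` enqueueing `δ` on the queue
contents (head of the queue is the rightmost element, enqueueing prepends). -/
inductive QStep {D : Type} : Head D → List D → List D → List D → Prop
  | emp (δ : List D) : QStep Head.emp δ [] δ
  | data (d : D) (δ ζ : List D) : QStep (Head.data d) δ (ζ ++ [d]) (δ ++ ζ)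
  | star (δ ζ : List D) : QStep Head.star δ ζ (δ ++ ζ)

/-- The process graph of a queue automaton. -/
def QA.proc {S A D : Type} (Q : QA S A D) : LTS (S × List D) A where
  tr := fun c a c' => ∃ h δ, Q.tr c.1 a h δ c'.1 ∧ QStep h δ c.2 c'.2
  fin := fun c => Q.fin c.1

/-- The queue automaton has finitely many transitions. -/
def QA.FiniteTrans {S A D : Type} (Q : QA S A D) : Prop :=
  Set.Finite {x : S × Option A × Head D × List D × S |
    Q.tr x.1 x.2.1 x.2.2.1 x.2.2.2.1 x.2.2.2.2}

/-- All transitions are singleton enqueues (`a[*/d]`) or separate dequeues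
(`a[ε/ε]` or `a[d/ε]`). -/
def QA.SingSep {S A D : Type} (Q : QA S A D) : Prop :=
  ∀ s a h δ t, Q.tr s a h δ t →
    (h = Head.star ∧ ∃ d, δ = [d]) ∨
    (h = Head.emp ∧ δ = []) ∨
    ((∃ d, h = Head.data d) ∧ δ = [])

/-! ### Auxiliary development -/

section Lang

variable {S₁ S₂ A : Type}

/-- One-sided branching simulation property. -/
def SimProp (L₁ : LTS S₁ A) (L₂ : LTS S₂ A) (R : S₁ → S₂ → Prop) : Prop :=
  ∀ s t, R s t →
    (∀ a s', L₁.tr s a s' →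
      ∃ t'' t', L₂.tauStar t t'' ∧ L₂.optStep t'' a t' ∧ R s t'' ∧ R s' t') ∧
    (L₁.fin s → ∃ t', L₂.tauStar t t' ∧ L₂.fin t')

lemma tauStar_wstep {L : LTS S₁ A} {s s' u : S₁} {w : List A}
    (h : L.tauStar s s') (hw : WStep L s' w u) : WStep L s w u := by
  induction h using Relation.ReflTransGen.head_induction_on with
  | refl => exact hw
  | head hstep _ ih => exact WStep.tau hstep ih

lemma sim_wstep {L₁ : LTS S₁ A} {L₂ : LTS S₂ A} {R : S₁ → S₂ → Prop}
    (hS : SimProp L₁ L₂ R) {s u : S₁} {w : List A}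
    (hw : WStep L₁ s w u) : ∀ t, R s t → L₁.fin u →
      ∃ v, WStep L₂ t w v ∧ L₂.fin v := by
  induction hw with
  | refl s =>
    intro t hR hfin
    obtain ⟨t', ht', hft'⟩ := (hS s t hR).2 hfin
    exact ⟨t', tauStar_wstep ht' (WStep.refl t'), hft'⟩
  | act hstep _ ih =>
    intro t hR hfin
    obtain ⟨t'', t', htau, hopt, _, hR'⟩ := (hS _ t hR).1 _ _ hstep
    rcases hopt with htr | ⟨h1, _⟩
    · obtain ⟨v, hv, hfv⟩ := ih t' hR' hfin
      exact ⟨v, tauStar_wstep htau (WStep.act htr hv), hfv⟩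
    · exact absurd h1 (by simp)
  | tau hstep _ ih =>
    intro t hR hfin
    obtain ⟨t'', t', htau, hopt, _, hR'⟩ := (hS _ t hR).1 _ _ hstep
    rcases hopt with htr | ⟨_, h2⟩
    · obtain ⟨v, hv, hfv⟩ := ih t' hR' hfin
      exact ⟨v, tauStar_wstep htau (WStep.tau htr hv), hfv⟩
    · obtain ⟨v, hv, hfv⟩ := ih t' hR' hfin
      exact ⟨v, tauStar_wstep htau (h2 ▸ hv), hfv⟩

lemma sim_lang_subset {L₁ : LTS S₁ A} {L₂ : LTS S₂ A} {R : S₁ → S₂ → Prop}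
    (hS : SimProp L₁ L₂ R) {s : S₁} {t : S₂} (hR : R s t) :
    L₁.lang s ⊆ L₂.lang t := by
  rintro w ⟨u, hw, hu⟩
  exact sim_wstep hS hw t hR hu

lemma bbisimSys_lang {L₁ : LTS S₁ A} {L₂ : LTS S₂ A} {s : S₁} {t : S₂}
    (h : BBisimSys L₁ s L₂ t) : L₁.lang s = L₂.lang t := by
  obtain ⟨R, ⟨h1, h2⟩, hR⟩ := h
  apply Set.Subset.antisymm
  · exact sim_lang_subset h1 hR
  · exact sim_lang_subset (L₁ := L₂) (R := fun a b => R b a) (fun s t hr => h2 t s hr) hR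

end Lang

section Construction

variable {S A D : Type}

/-- Erase markers from the new queue alphabet. -/
def era (l : List (Option D)) : List D := l.filterMap id

@[simp] lemma era_nil : era ([] : List (Option D)) = [] := rfl
@[simp] lemma era_cons_some (d : D) (l : List (Option D)) :
    era (some d :: l) = d :: era l := rfl
@[simp] lemma era_cons_none (l : List (Option D)) :
    era (none :: l) = era l := rfl
@[simp] lemma era_append (l₁ l₂ : List (Option D)) :
    era (l₁ ++ l₂) = era l₁ ++ era l₂ := List.filterMap_append ..
@[simp] lemma era_map_some (l : List D) : era (l.map some) = l := by
  simp [era]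

/-- States of the transformed automaton: an original state together with a
bounded list of data still to be enqueued. -/
abbrev NSt (S D : Type) (N : ℕ) := S × {l : List D // l.length ≤ N}

/-- Transitions of the transformed automaton. -/
inductive NTr (Q : QA S A D) (N : ℕ) :
    NSt S D N → Option A → Head (Option D) → List (Option D) → NSt S D N → Prop where
  | emp {s a δ t} (h : Q.tr s a Head.emp δ t) (hδ : δ.length ≤ N) :
      NTr Q N (s, ⟨[], by simp⟩) a Head.emp [] (t, ⟨δ, hδ⟩)
  | data {s a d δ t} (h : Q.tr s a (Head.data d) δ t) (hδ : δ.length ≤ N) :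
      NTr Q N (s, ⟨[], by simp⟩) a (Head.data (some d)) [] (t, ⟨δ, hδ⟩)
  | star1 {s a d δ t} (h : Q.tr s a Head.star (δ ++ [d]) t) (hδ : δ.length ≤ N) :
      NTr Q N (s, ⟨[], by simp⟩) a Head.star [some d] (t, ⟨δ, hδ⟩)
  | star0 {s a t} (h : Q.tr s a Head.star [] t) :
      NTr Q N (s, ⟨[], by simp⟩) a Head.star [none] (t, ⟨[], by simp⟩)
  | enq {s : S} {ρ : List D} {d : D} (hρ : (ρ ++ [d]).length ≤ N)
      (hρ' : ρ.length ≤ N) :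
      NTr Q N (s, ⟨ρ ++ [d], hρ⟩) none Head.star [some d] (s, ⟨ρ, hρ'⟩)
  | pop {s : S} {ρ : {l : List D // l.length ≤ N}} :
      NTr Q N (s, ρ) none (Head.data none) [] (s, ρ)

/-- The transformed automaton. -/
def NQA (Q : QA S A D) (N : ℕ) : QA (NSt S D N) A (Option D) where
  tr := NTr Q N
  init := (Q.init, ⟨[], by simp⟩)
  fin := fun p => Q.fin p.1

end Construction
section Bisim

variable {S A D : Type} {Q : QA S A D} {N : ℕ}

lemma era_all_none {μ : List (Option D)} (h : era μ = []) : ∀ x ∈ μ, x = none := by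
  simpa [era, List.filterMap_eq_nil_iff] using h

lemma ntau_clear (s : S) (ρ : List D) (hρ : ρ.length ≤ N) (ζ' : List (Option D)) :
    (NQA Q N).proc.tauStar ((s, ⟨ρ, hρ⟩), ζ')
      ((s, ⟨[], by simp⟩), ρ.map some ++ ζ') := by
  induction ρ using List.reverseRecOn generalizing ζ' with
  | nil => exact Relation.ReflTransGen.refl
  | append_singleton ρ₀ d ih =>
    have hρ₀ : ρ₀.length ≤ N := le_trans (by simp) hρ
    refine Relation.ReflTransGen.head (b := ((s, ⟨ρ₀, hρ₀⟩), some d :: ζ')) ?_ ?_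
    · exact ⟨Head.star, [some d], NTr.enq hρ hρ₀, QStep.star [some d] ζ'⟩
    · simpa [LTS.tauStar] using ih hρ₀ (some d :: ζ')

lemma ntau_pop (q1 : NSt S D N) (η μ : List (Option D)) (hμ : ∀ x ∈ μ, x = none) :
    (NQA Q N).proc.tauStar (q1, η ++ μ) (q1, η) := by
  induction μ using List.reverseRecOn with
  | nil => simp; exact Relation.ReflTransGen.refl
  | append_singleton μ₀ x ih =>
    have hx : x = none := hμ x (by simp)
    subst hx
    have step : (NQA Q N).proc.tr (q1, η ++ (μ₀ ++ [none])) none (q1, η ++ μ₀) := by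
      refine ⟨Head.data none, [], NTr.pop, ?_⟩
      rw [show η ++ (μ₀ ++ [none]) = (η ++ μ₀) ++ [none] by simp]
      exact QStep.data none [] (η ++ μ₀)
    exact Relation.ReflTransGen.head step (ih (fun y hy => hμ y (by simp [hy])))

lemma era_decomp (ζ'' : List (Option D)) (ζ₂ : List D) (d : D)
    (h : era ζ'' = ζ₂ ++ [d]) :
    ∃ η μ, ζ'' = η ++ some d :: μ ∧ era η = ζ₂ ∧ (∀ x ∈ μ, x = none) := by
  induction ζ'' generalizing ζ₂ with
  | nil => simp at h
  | cons x l ih =>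
    cases x with
    | none =>
      obtain ⟨η, μ, h1, h2, h3⟩ := ih ζ₂ (by simpa using h)
      exact ⟨none :: η, μ, by simp [h1], by simp [h2], h3⟩
    | some e =>
      rw [era_cons_some] at h
      cases ζ₂ with
      | nil =>
        simp at h
        obtain ⟨he, hl⟩ := h
        exact ⟨[], l, by simp [he], rfl, era_all_none hl⟩
      | cons c ζ₂' =>
        simp at h
        obtain ⟨he, hl⟩ := h
        obtain ⟨η, μ, h1, h2, h3⟩ := ih ζ₂' hl
        exact ⟨some e :: η, μ, by simp [h1], by simp [h2, he], h3⟩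

/-- The branching bisimulation relation. -/
def NR (Q : QA S A D) (N : ℕ) :
    (S × List D) → (NSt S D N × List (Option D)) → Prop :=
  fun p q => q.1.1 = p.1 ∧ p.2 = q.1.2.1 ++ era q.2

lemma NR_isBBisim (HN : ∀ s a h δ t, Q.tr s a h δ t → δ.length ≤ N) :
    IsBBisimSys Q.proc (NQA Q N).proc (NR Q N) := by
  constructor
  · rintro ⟨s0, ζ⟩ ⟨⟨s, ⟨ρl, hρ⟩⟩, ζ'⟩ ⟨hs, hζ⟩
    simp only at hs hζ
    subst hs
    constructor
    · rintro a ⟨t, ζn⟩ ⟨h, δ, htr, hqs⟩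
      simp only at htr hqs
      have hδN : δ.length ≤ N := HN _ _ _ _ _ htr
      cases hqs with
      | emp =>
        obtain ⟨hρnil, hζ'⟩ := List.append_eq_nil_iff.mp hζ.symm
        subst hρnil
        refine ⟨((s, ⟨[], by simp⟩), []), ((t, ⟨ζn, hδN⟩), []), ?_, Or.inl ?_,
          ⟨rfl, by simpa using hζ⟩, ⟨rfl, by simp⟩⟩
        · simpa using ntau_pop (Q := Q) (s, ⟨[], by simp⟩) [] ζ' (era_all_none hζ')
        · exact ⟨Head.emp, [], NTr.emp htr hδN, QStep.emp []⟩
      | data d δ ζ₂ =>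
        obtain ⟨η, μ, h1, h2, h3⟩ := era_decomp (ρl.map some ++ ζ') ζ₂ d (by simpa using hζ.symm)
        refine ⟨((s, ⟨[], by simp⟩), η ++ [some d]), ((t, ⟨δ, hδN⟩), η), ?_, Or.inl ?_,
          ⟨rfl, by simp [h2]⟩, ⟨rfl, by simp [h2]⟩⟩
        · refine Relation.ReflTransGen.trans (ntau_clear s ρl hρ ζ') ?_
          rw [h1, show η ++ some d :: μ = (η ++ [some d]) ++ μ by simp]
          exact ntau_pop _ _ μ h3
        · refine ⟨Head.data (some d), [], NTr.data htr hδN, ?_⟩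
          have := QStep.data (some d) ([] : List (Option D)) η
          simpa using this
      | star δ ζq =>
        rcases List.eq_nil_or_concat δ with hnil | ⟨δ₀, d, hcat⟩
        · subst hnil
          refine ⟨((s, ⟨[], by simp⟩), ρl.map some ++ ζ'),
            ((t, ⟨[], by simp⟩), none :: (ρl.map some ++ ζ')),
            ntau_clear s ρl hρ ζ', Or.inl ?_, ⟨rfl, by simpa using hζ⟩,
            ⟨rfl, by simpa using hζ⟩⟩
          refine ⟨Head.star, [none], NTr.star0 htr, ?_⟩
          have := QStep.star [(none : Option D)] (ρl.map some ++ ζ')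
          simpa using this
        · rw [List.concat_eq_append] at hcat
          subst hcat
          have hδ₀ : δ₀.length ≤ N := le_trans (by simp) hδN
          refine ⟨((s, ⟨[], by simp⟩), ρl.map some ++ ζ'),
            ((t, ⟨δ₀, hδ₀⟩), some d :: (ρl.map some ++ ζ')),
            ntau_clear s ρl hρ ζ', Or.inl ?_, ⟨rfl, by simpa using hζ⟩,
            ⟨rfl, by simp [hζ]⟩⟩
          refine ⟨Head.star, [some d], NTr.star1 htr hδ₀, ?_⟩
          have := QStep.star [some d] (ρl.map some ++ ζ')
          simpa using this
    · intro hf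
      exact ⟨_, Relation.ReflTransGen.refl, hf⟩
  · rintro ⟨s0, ζ⟩ ⟨⟨s, ρ⟩, ζ'⟩ ⟨hs, hζ⟩
    simp only at hs hζ
    subst hs
    constructor
    · rintro a ⟨⟨t, ρ₂⟩, ζ₂'⟩ ⟨h, δ', htr, hqs⟩
      simp only at htr hqs
      cases htr with
      | @emp _ _ δ _ htr hδ =>
        cases hqs with
        | emp _ =>
          refine ⟨(s, ζ), (t, δ), Relation.ReflTransGen.refl, Or.inl ?_,
            ⟨rfl, hζ⟩, ⟨rfl, by simp⟩⟩
          have hz : ζ = [] := by simpa using hζ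
          rw [hz]
          exact ⟨Head.emp, δ, htr, QStep.emp δ⟩
      | @data _ _ d δ _ htr hδ =>
        cases hqs with
        | data _ _ ζ₀ =>
          refine ⟨(s, ζ), (t, δ ++ era ζ₀), Relation.ReflTransGen.refl, Or.inl ?_,
            ⟨rfl, hζ⟩, ⟨rfl, by simp⟩⟩
          have hz : ζ = era ζ₀ ++ [d] := by simpa using hζ
          rw [hz]
          exact ⟨Head.data d, δ, htr, QStep.data d δ (era ζ₀)⟩
      | @star1 _ _ d δ _ htr hδ =>
        cases hqs with
        | star _ _ =>
          refine ⟨(s, ζ), (t, (δ ++ [d]) ++ ζ), Relation.ReflTransGen.refl, Or.inl ?_,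
            ⟨rfl, hζ⟩, ⟨rfl, by simp [hζ]⟩⟩
          exact ⟨Head.star, δ ++ [d], htr, QStep.star (δ ++ [d]) ζ⟩
      | @star0 _ _ _ htr =>
        cases hqs with
        | star _ _ =>
          refine ⟨(s, ζ), (t, [] ++ ζ), Relation.ReflTransGen.refl, Or.inl ?_,
            ⟨rfl, hζ⟩, ⟨rfl, by simpa using hζ⟩⟩
          exact ⟨Head.star, [], htr, QStep.star [] ζ⟩
      | @enq _ _ d hρq hρ' =>
        cases hqs with
        | star _ _ =>
          exact ⟨(s, ζ), (s, ζ), Relation.ReflTransGen.refl, Or.inr ⟨rfl, rfl⟩,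
            ⟨rfl, hζ⟩, ⟨rfl, by simpa using hζ⟩⟩
      | pop =>
        cases hqs with
        | data _ _ ζ₀ =>
          exact ⟨(s, ζ), (s, ζ), Relation.ReflTransGen.refl, Or.inr ⟨rfl, rfl⟩,
            ⟨rfl, hζ⟩, ⟨rfl, by simpa using hζ⟩⟩
    · intro hf
      exact ⟨_, Relation.ReflTransGen.refl, hf⟩

end Bisim
section Fin

variable {S A D : Type}

instance instFiniteOption' (D : Type) [Finite D] : Finite (Option D) :=
  Finite.of_injective (fun o : Option D => match o with
    | none => (Sum.inl () : Unit ⊕ D)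
    | some d => Sum.inr d)
    (by intro a b h; cases a <;> cases b <;> simp_all)

instance instFiniteHead [Finite D] : Finite (Head D) := by
  refine Finite.of_injective
    (fun h => match h with
      | Head.emp => (none : Option (Option D))
      | Head.star => some none
      | Head.data d => some (some d)) ?_
  intro a b hab
  cases a <;> cases b <;> simp_all

instance instFiniteBdd [Finite D] (N : ℕ) : Finite {l : List D // l.length ≤ N} :=
  (List.finite_length_le D N).to_subtype

lemma NTr_len_le_one {Q : QA S A D} {N : ℕ} {s a h δ t} (htr : NTr Q N s a h δ t) :
    δ.length ≤ 1 := by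
  cases htr <;> simp

lemma NQA_finiteTrans [Finite S] [Finite A] [Finite D] (Q : QA S A D) (N : ℕ) :
    (NQA Q N).FiniteTrans := by
  classical
  set T2 := NSt S D N × Option A × Head (Option D) ×
    {l : List (Option D) // l.length ≤ 1} × NSt S D N with hT2
  have : Finite T2 := by infer_instance
  refine Set.Finite.subset (Set.finite_range
    (fun x : T2 => (x.1, x.2.1, x.2.2.1, x.2.2.2.1.1, x.2.2.2.2))) ?_
  rintro ⟨s, a, h, δ, t⟩ htr
  exact ⟨(s, a, h, ⟨δ, NTr_len_le_one htr⟩, t), rfl⟩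

lemma NQA_singSep (Q : QA S A D) (N : ℕ) : (NQA Q N).SingSep := by
  rintro s a h δ t htr
  cases htr with
  | emp h hδ => exact Or.inr (Or.inl ⟨rfl, rfl⟩)
  | data h hδ => exact Or.inr (Or.inr ⟨⟨_, rfl⟩, rfl⟩)
  | star1 h hδ => exact Or.inl ⟨rfl, _, rfl⟩
  | star0 h => exact Or.inl ⟨rfl, _, rfl⟩
  | enq hρ hρ' => exact Or.inl ⟨rfl, _, rfl⟩
  | pop => exact Or.inr (Or.inr ⟨⟨_, rfl⟩, rfl⟩)

end Fin
/-- For every queue automaton there is one with only singleton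
enqueues and separate dequeues whose process graph is branching bisimilar
(hence with the same language). -/
theorem singleton_enqueue_separate_dequeue {S A D : Type} [Finite S] [Finite A] [Finite D]
    (Q : QA S A D) (hQ : Q.FiniteTrans) :
    ∃ (S' D' : Type) (_ : Finite S') (_ : Finite D') (Q' : QA S' A D'),
      Q'.FiniteTrans ∧ Q'.SingSep ∧
      BBisimSys Q.proc (Q.init, []) Q'.proc (Q'.init, []) ∧
      Q.proc.lang (Q.init, []) = Q'.proc.lang (Q'.init, []) := by
  obtain ⟨N, hN⟩ : ∃ N, ∀ s a h δ t, Q.tr s a h δ t → δ.length ≤ N := by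
    obtain ⟨N, hB⟩ := (hQ.image (fun x => x.2.2.2.1.length)).bddAbove
    exact ⟨N, fun s a h δ t ht => hB ⟨(s, a, h, δ, t), ht, rfl⟩⟩
  refine ⟨NSt S D N, Option D, inferInstance, inferInstance, NQA Q N,
    NQA_finiteTrans Q N, NQA_singSep Q N, ?_, ?_⟩
  · exact ⟨NR Q N, NR_isBBisim hN, ⟨rfl, rfl⟩⟩
  · exact bbisimSys_lang ⟨NR Q N, NR_isBBisim hN, ⟨rfl, rfl⟩⟩
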